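/- Let S be a unital star-subalgebra of Matrix n n ℂ, let ρ, ω ∈ Matrix n n ℂ be positive definite with Tr ρ = Tr ω = 1, and let ρ_C, ω_C ∈ S be positive definite with Tr(ρ_C * c) = Tr(ρ * c) and Tr(ω_C * c) = Tr(ω * c) for all c ∈ S. Let E be a ρ-preserving conditional expectation from Matrix n n ℂ onto S. Then E also preserves ω, i.e. Tr(ω * E(a)) = Tr(ω * a) for all a ∈ Matrix n n ℂ, if and only if the sufficiency condition ω^{1/2} * ω_C^{-1/2} = ρ^{1/2} * ρ_C^{-1/2} holds. -/

import Mathlib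

open Matrix
open scoped ComplexOrder
open scoped MatrixOrder

/-- A linear map between complex matrix algebras is completely positive if for every `k ≥ 1`
its blockwise application to `k × k` block matrices sends positive semidefinite matrices to
positive semidefinite matrices. -/
def IsCP {n m : Type*} [Fintype n] [Fintype m]
    (Φ : Matrix n n ℂ → Matrix m m ℂ) : Prop :=
  ∀ (k : ℕ) (M : Matrix (n × Fin k) (n × Fin k) ℂ), M.PosSemidef →
    (Matrix.of fun p q : m × Fin k =>
      Φ (Matrix.of fun i j => M (i, p.2) (j, q.2)) p.1 q.1).PosSemidef

/-- A conditional expectation onto a unital star-subalgebra `S` (given by its carrier set)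
is a unital completely positive linear map with range inside `S`, fixing every element of
`S`, and satisfying the `S`-bimodule property. -/
def IsCondExpOn {d : Type*} [Fintype d] [DecidableEq d] (S : Set (Matrix d d ℂ))
    (E : Matrix d d ℂ → Matrix d d ℂ) : Prop :=
  (∀ x y, E (x + y) = E x + E y) ∧
  (∀ (z : ℂ) (x : Matrix d d ℂ), E (z • x) = z • E x) ∧
  E 1 = 1 ∧
  IsCP E ∧
  (∀ x, E x ∈ S) ∧
  (∀ c ∈ S, E c = c) ∧
  (∀ c₁ ∈ S, ∀ c₂ ∈ S, ∀ x, E (c₁ * x * c₂) = c₁ * E x * c₂)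

section Aux

variable {m : Type*} [Fintype m] [DecidableEq m]

lemma trace_mul_std (M : Matrix m m ℂ) (i j : m) :
    (M * single i j 1).trace = M j i := by
  simp [Matrix.trace, Matrix.diag, Matrix.mul_apply, Matrix.single, ite_and,
    Finset.sum_ite_eq, Finset.sum_ite_eq']

lemma trace_ext {M N : Matrix m m ℂ} (h : ∀ x, (M * x).trace = (N * x).trace) : M = N := by
  ext j i
  have := h (single i j 1)
  rwa [trace_mul_std, trace_mul_std] at this

lemma trace_psd_nonneg {M : Matrix m m ℂ} (h : M.PosSemidef) : 0 ≤ M.trace := by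
  have : ∀ i, 0 ≤ M i i := by
    intro i
    have := h.dotProduct_mulVec_nonneg (Pi.single i 1)
    simpa [dotProduct, Matrix.mulVec, Pi.single_apply, Finset.sum_ite_eq] using this
  exact Finset.sum_nonneg fun i _ => this i

lemma trace_conj_self_zero {X : Matrix m m ℂ} (h : (Xᴴ * X).trace = 0) : X = 0 := by
  have hdiag : ∀ i, (Xᴴ * X) i i = star (fun k => X k i) ⬝ᵥ (fun k => X k i) := by
    intro i; simp [Matrix.mul_apply, dotProduct, Matrix.conjTranspose_apply, mul_comm]
  have hnn : ∀ i ∈ Finset.univ, 0 ≤ (Xᴴ * X) i i := by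
    intro i _; rw [hdiag i]; exact dotProduct_star_self_nonneg _
  have hz : ∀ i ∈ Finset.univ, (Xᴴ * X) i i = 0 :=
    (Finset.sum_eq_zero_iff_of_nonneg hnn).mp h
  ext k i
  have := hz i (Finset.mem_univ i)
  rw [hdiag i] at this
  have := dotProduct_star_self_eq_zero.mp this
  exact congrFun this k

lemma posdef_of_psd_unit {M : Matrix m m ℂ} (h : M.PosSemidef) (hdet : IsUnit M.det) :
    M.PosDef := by
  refine PosDef.of_dotProduct_mulVec_pos h.1 fun x hx => lt_of_le_of_ne (h.dotProduct_mulVec_nonneg x) fun h0 => hx ?_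
  have hMx : M *ᵥ x = 0 := (h.dotProduct_mulVec_zero_iff x).mp h0.symm
  have : M⁻¹ *ᵥ (M *ᵥ x) = x := by
    rw [Matrix.mulVec_mulVec, Matrix.nonsing_inv_mul _ hdet, Matrix.one_mulVec]
  rw [← this, hMx, Matrix.mulVec_zero]

lemma sqrt_posdef {A : Matrix m m ℂ} (hA : A.PosDef) : (CFC.sqrt A).PosDef := by
  refine posdef_of_psd_unit (CFC.sqrt_nonneg A).posSemidef ?_
  have h2 : (CFC.sqrt A).det * (CFC.sqrt A).det = A.det := by
    rw [← Matrix.det_mul, (CFC.sqrt_mul_sqrt_self A hA.posSemidef.nonneg)]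
  have : A.det ≠ 0 := hA.det_pos.ne'
  refine isUnit_iff_ne_zero.mpr fun h0 => this ?_
  rw [← h2, h0, mul_zero]

lemma commute_sqrt {A : Matrix m m ℂ} (hA : A.PosDef) (B : Matrix m m ℂ)
    (h : A * B = B * A) : (CFC.sqrt A) * B = B * (CFC.sqrt A) := by
  set s := (CFC.sqrt A) with hs
  have hss : s * s = A := (CFC.sqrt_mul_sqrt_self A hA.posSemidef.nonneg)
  have hsH : sᴴ = s := (CFC.sqrt_nonneg A).posSemidef.1
  set M := s * B - B * s with hM
  have key : s * M + M * s = 0 := by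
    simp only [hM, Matrix.mul_sub, Matrix.sub_mul, ← Matrix.mul_assoc]
    rw [hss, Matrix.mul_assoc B s s, hss, h]
    abel
  set r := CFC.sqrt (CFC.sqrt A) with hr
  have hrr : r * r = s := CFC.sqrt_mul_sqrt_self _ (CFC.sqrt_nonneg A)
  have hrH : rᴴ = r := (CFC.sqrt_nonneg _).posSemidef.1
  have t1 : Mᴴ * (s * M) = (r * M)ᴴ * (r * M) := by
    rw [Matrix.conjTranspose_mul, hrH, ← hrr]
    noncomm_ring
  have t2 : ((M * s) * Mᴴ).trace = ((M * r)ᴴ * (M * r)).trace := by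
    rw [Matrix.conjTranspose_mul, hrH,
      show M * s * Mᴴ = M * r * (r * Mᴴ) by rw [← hrr]; noncomm_ring,
      Matrix.trace_mul_comm, Matrix.mul_assoc]
  have hsum : (Mᴴ * (s * M)).trace + ((M * s) * Mᴴ).trace = 0 := by
    rw [Matrix.trace_mul_comm (M * s) Mᴴ, ← Matrix.trace_add, ← Matrix.mul_add, key,
      Matrix.mul_zero, Matrix.trace_zero]
  have n1 : 0 ≤ (Mᴴ * (s * M)).trace := by
    rw [t1]; exact trace_psd_nonneg (posSemidef_conjTranspose_mul_self _)
  have n2 : 0 ≤ ((M * s) * Mᴴ).trace := by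
    rw [t2]; exact trace_psd_nonneg (posSemidef_conjTranspose_mul_self _)
  have z1 : (Mᴴ * (s * M)).trace = 0 := by
    have := add_eq_zero_iff_of_nonneg n1 n2
    exact (this.mp hsum).1
  have hrM : r * M = 0 := by
    rw [t1] at z1; exact trace_conj_self_zero z1
  have hAM : A * M = 0 := by
    rw [← hss, Matrix.mul_assoc, ← hrr, Matrix.mul_assoc, Matrix.mul_assoc, hrM,
      Matrix.mul_zero, Matrix.mul_zero, Matrix.mul_zero]
  have hdet : IsUnit A.det := isUnit_iff_ne_zero.mpr hA.det_pos.ne'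
  have hM0 : M = 0 := by
    have : A⁻¹ * (A * M) = M := by rw [← Matrix.mul_assoc, Matrix.nonsing_inv_mul _ hdet, Matrix.one_mul]
    rw [← this, hAM, Matrix.mul_zero]
  have := sub_eq_zero.mp hM0
  exact this

lemma psd_mul_of_commute {A B : Matrix m m ℂ} (hA : A.PosDef) (hB : B.PosDef)
    (h : A * B = B * A) : (A * B).PosSemidef := by
  have hc := commute_sqrt hA B h
  have hss : (CFC.sqrt A) * (CFC.sqrt A) = A := (CFC.sqrt_mul_sqrt_self A hA.posSemidef.nonneg)
  have hsH : (CFC.sqrt A)ᴴ = (CFC.sqrt A) := (CFC.sqrt_nonneg A).posSemidef.1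
  have h2 : (CFC.sqrt A)ᴴ * B * (CFC.sqrt A) = A * B := by
    rw [hsH, Matrix.mul_assoc, ← hc, ← Matrix.mul_assoc, hss]
  rw [← h2]
  exact hB.posSemidef.conjTranspose_mul_mul_same _
end Aux

/-- Petz's sufficiency theorem in matrix algebras: a `ρ`-preserving conditional
expectation onto `S` also preserves `ω` iff the sufficiency condition
`ω^{1/2} ω_C^{-1/2} = ρ^{1/2} ρ_C^{-1/2}` holds. -/
theorem omega_preserved_iff_sufficiency
    {n : ℕ} (S : StarSubalgebra ℂ (Matrix (Fin n) (Fin n) ℂ))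
    (ρ ω : Matrix (Fin n) (Fin n) ℂ) (hρ : ρ.PosDef) (hω : ω.PosDef)
    (hρtr : ρ.trace = 1) (hωtr : ω.trace = 1)
    (ρC ωC : Matrix (Fin n) (Fin n) ℂ) (hρCS : ρC ∈ S) (hωCS : ωC ∈ S)
    (hρC : ρC.PosDef) (hωC : ωC.PosDef)
    (hρCtr : ∀ c ∈ S, (ρC * c).trace = (ρ * c).trace)
    (hωCtr : ∀ c ∈ S, (ωC * c).trace = (ω * c).trace)
    (E : Matrix (Fin n) (Fin n) ℂ → Matrix (Fin n) (Fin n) ℂ)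
    (hE : IsCondExpOn (S : Set (Matrix (Fin n) (Fin n) ℂ)) E)
    (hEρ : ∀ x, (ρ * E x).trace = (ρ * x).trace) :
    (∀ x, (ω * E x).trace = (ω * x).trace) ↔
      (CFC.sqrt ω) * (CFC.sqrt ωC)⁻¹ =
        (CFC.sqrt ρ) * (CFC.sqrt ρC)⁻¹ := by
  obtain ⟨hadd, hsmul, hone, hcp, hrange, hfix, hbi⟩ := hE
  have h1S : (1 : Matrix (Fin n) (Fin n) ℂ) ∈ (S : Set (Matrix (Fin n) (Fin n) ℂ)) := S.one_mem
  have hEr : ∀ c ∈ (S : Set (Matrix (Fin n) (Fin n) ℂ)), ∀ x, E (x * c) = E x * c := by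
    intro c hc x
    have := hbi 1 h1S c hc x
    rwa [one_mul, one_mul] at this
  have hEl : ∀ c ∈ (S : Set (Matrix (Fin n) (Fin n) ℂ)), ∀ x, E (c * x) = c * E x := by
    intro c hc x
    have := hbi c hc 1 h1S x
    rwa [mul_one, mul_one] at this
  set F : Matrix (Fin n) (Fin n) ℂ →ₗ[ℂ] Matrix (Fin n) (Fin n) ℂ :=
    IsLinearMap.mk' E ⟨hadd, hsmul⟩ with hFdef
  have hF : ∀ x, F x = E x := fun _ => rfl
  set T : Matrix (Fin n) (Fin n) ℂ :=
    Matrix.of (fun i j => (E (single j i 1)).trace) with hTdef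
  have hT : ∀ y, (E y).trace = (T * y).trace := by
    intro y
    have lhs : (E y).trace = ∑ p, ∑ q, y p q * (E (single p q (1:ℂ))).trace := by
      conv_lhs => rw [← hF, matrix_eq_sum_single y]
      simp only [map_sum, Matrix.trace_sum]
      refine Finset.sum_congr rfl fun p _ => Finset.sum_congr rfl fun q _ => ?_
      have h1 : single p q (y p q) = y p q • single p q (1:ℂ) := by
        rw [smul_single, smul_eq_mul, mul_one]
      rw [h1, F.map_smul, Matrix.trace_smul, smul_eq_mul, hF]
    have rhs : (T * y).trace = ∑ p, ∑ q, y p q * (E (single p q (1:ℂ))).trace := by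
      simp only [hTdef, Matrix.trace, Matrix.diag_apply, Matrix.mul_apply, Matrix.of_apply]
      rw [Finset.sum_comm]
      exact Finset.sum_congr rfl fun p _ => Finset.sum_congr rfl fun q _ => mul_comm _ _
    rw [lhs, rhs]
  have hTc : ∀ c ∈ (S : Set (Matrix (Fin n) (Fin n) ℂ)), T * c = c * T := by
    intro c hc
    apply trace_ext; intro x
    calc (T * c * x).trace = (T * (c * x)).trace := by rw [Matrix.mul_assoc]
      _ = (E (c * x)).trace := (hT _).symm
      _ = (c * E x).trace := by rw [hEl c hc]
      _ = (E x * c).trace := Matrix.trace_mul_comm _ _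
      _ = (E (x * c)).trace := by rw [hEr c hc]
      _ = (T * (x * c)).trace := hT _
      _ = ((T * x) * c).trace := by rw [Matrix.mul_assoc]
      _ = (c * (T * x)).trace := Matrix.trace_mul_comm _ _
      _ = (c * T * x).trace := by rw [Matrix.mul_assoc]
  have hchain : ∀ (D DC : Matrix (Fin n) (Fin n) ℂ), DC ∈ (S : Set (Matrix (Fin n) (Fin n) ℂ)) →
      (∀ c ∈ S, (DC * c).trace = (D * c).trace) →
      ∀ x, (DC * T * x).trace = (D * E x).trace := by
    intro D DC hDC hDCtr x
    calc (DC * T * x).trace = (DC * (T * x)).trace := by rw [Matrix.mul_assoc]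
      _ = ((T * x) * DC).trace := Matrix.trace_mul_comm _ _
      _ = (T * (x * DC)).trace := by rw [Matrix.mul_assoc]
      _ = (E (x * DC)).trace := (hT _).symm
      _ = (E x * DC).trace := by rw [hEr DC hDC]
      _ = (DC * E x).trace := Matrix.trace_mul_comm _ _
      _ = (D * E x).trace := hDCtr (E x) (hrange x)
  have hρT : ρC * T = ρ := by
    apply trace_ext; intro x
    rw [hchain ρ ρC hρCS hρCtr x, hEρ x]
  have hiff : (∀ x, (ω * E x).trace = (ω * x).trace) ↔ ωC * T = ω := by
    constructor
    · intro h
      apply trace_ext; intro x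
      rw [hchain ω ωC hωCS hωCtr x, h x]
    · intro h x
      calc (ω * E x).trace = (ωC * T * x).trace := (hchain ω ωC hωCS hωCtr x).symm
        _ = (ω * x).trace := by rw [h]
  -- positivity and commutation facts
  set s := (CFC.sqrt ρC) with hsdef
  have hss : s * s = ρC := (CFC.sqrt_mul_sqrt_self ρC hρC.posSemidef.nonneg)
  have hsρC : s.PosDef := sqrt_posdef hρC
  have hsd : IsUnit s.det := isUnit_iff_ne_zero.mpr hsρC.det_pos.ne'
  have cρ : T * ρC = ρC * T := hTc ρC hρCS
  have hdT : IsUnit T.det := by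
    have hdet : ρC.det * T.det = ρ.det := by rw [← Matrix.det_mul, hρT]
    refine isUnit_iff_ne_zero.mpr fun h0 => hρ.det_pos.ne' ?_
    rw [← hdet, h0, mul_zero]
  have c1 : s * T = T * s := commute_sqrt hρC T cρ.symm
  have hTpsd : T.PosSemidef := by
    have hinvH : (s⁻¹)ᴴ = s⁻¹ := hsρC.isHermitian.inv
    have key : s⁻¹ * ρ * s⁻¹ = T := by
      calc s⁻¹ * ρ * s⁻¹ = s⁻¹ * (ρC * T) * s⁻¹ := by rw [hρT]
        _ = s⁻¹ * (s * s * T) * s⁻¹ := by rw [hss]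
        _ = (s⁻¹ * s) * (s * T) * s⁻¹ := by noncomm_ring
        _ = (s * T) * s⁻¹ := by rw [Matrix.nonsing_inv_mul _ hsd, Matrix.one_mul]
        _ = (T * s) * s⁻¹ := by rw [c1]
        _ = T * (s * s⁻¹) := by rw [Matrix.mul_assoc]
        _ = T := by rw [Matrix.mul_nonsing_inv _ hsd, Matrix.mul_one]
    have hpsd : ((s⁻¹)ᴴ * ρ * s⁻¹).PosSemidef := hρ.posSemidef.conjTranspose_mul_mul_same _
    rw [hinvH, key] at hpsd
    exact hpsd
  have hTpos : T.PosDef := posdef_of_psd_unit hTpsd hdT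
  set sT := (CFC.sqrt T) with hsTdef
  have hsTss : sT * sT = T := (CFC.sqrt_mul_sqrt_self T hTpos.posSemidef.nonneg)
  have hsT : sT.PosDef := sqrt_posdef hTpos
  have c2 : sT * s = s * sT := commute_sqrt hTpos s c1.symm
  have hρfrac : (CFC.sqrt ρ) * s⁻¹ = sT := by
    have X2 : (s * sT) * (s * sT) = ρ := by
      calc (s * sT) * (s * sT) = s * (sT * s) * sT := by noncomm_ring
        _ = s * (s * sT) * sT := by rw [c2]
        _ = (s * s) * (sT * sT) := by noncomm_ring
        _ = ρC * T := by rw [hss, hsTss]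
        _ = ρ := hρT
    have Xpsd : (s * sT).PosSemidef := psd_mul_of_commute hsρC hsT c2.symm
    have hXsqrt : s * sT = (CFC.sqrt ρ) :=
      (CFC.sqrt_unique X2 Xpsd.nonneg).symm
    rw [← hXsqrt, ← c2, Matrix.mul_assoc, Matrix.mul_nonsing_inv _ hsd, Matrix.mul_one]
  rw [hiff, hρfrac]
  set u := (CFC.sqrt ωC) with hudef
  have huu : u * u = ωC := (CFC.sqrt_mul_sqrt_self ωC hωC.posSemidef.nonneg)
  have hsωC : u.PosDef := sqrt_posdef hωC
  have hud : IsUnit u.det := isUnit_iff_ne_zero.mpr hsωC.det_pos.ne'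
  have cω : T * ωC = ωC * T := hTc ωC hωCS
  have c1ω : u * T = T * u := commute_sqrt hωC T cω.symm
  have c2ω : sT * u = u * sT := commute_sqrt hTpos u c1ω.symm
  constructor
  · intro h
    have Y2 : (u * sT) * (u * sT) = ω := by
      calc (u * sT) * (u * sT) = u * (sT * u) * sT := by noncomm_ring
        _ = u * (u * sT) * sT := by rw [c2ω]
        _ = (u * u) * (sT * sT) := by noncomm_ring
        _ = ωC * T := by rw [huu, hsTss]
        _ = ω := h
    have Ypsd : (u * sT).PosSemidef := psd_mul_of_commute hsωC hsT c2ω.symm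
    have hYsqrt : u * sT = (CFC.sqrt ω) :=
      (CFC.sqrt_unique Y2 Ypsd.nonneg).symm
    rw [← hYsqrt, ← c2ω, Matrix.mul_assoc, Matrix.mul_nonsing_inv _ hud, Matrix.mul_one]
  · intro h
    have hsω : (CFC.sqrt ω) = sT * u := by
      have h2 := congrArg (· * u) h
      simp only [Matrix.mul_assoc] at h2
      rwa [Matrix.nonsing_inv_mul _ hud, Matrix.mul_one] at h2
    have : ω = ωC * T := by
      calc ω = (CFC.sqrt ω) * (CFC.sqrt ω) := (CFC.sqrt_mul_sqrt_self ω hω.posSemidef.nonneg).symm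
        _ = (sT * u) * (sT * u) := by rw [hsω]
        _ = sT * (u * sT) * u := by noncomm_ring
        _ = sT * (sT * u) * u := by rw [← c2ω]
        _ = (sT * sT) * (u * u) := by noncomm_ring
        _ = T * ωC := by rw [hsTss, huu]
        _ = ωC * T := cω
    exact this.symm
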